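/- For every natural number n and all integers t and m, 220·∑_{j=1}^n (−1)^{j−1}·G_{j+t−1}·G_{j+t}·G_{j+t+1}·G_{j+t+2}·G_{j+t+m} = −(F_{m+2} − F_{m−3})·(−((−1)^{n+1}·G_{n+t+3}^5 + G_{t+3}^5) + 9·((−1)^{n+1}·G_{n+t+2}^5 + G_{t+2}^5)) − (F_{m+2} − F_{m−3})·(31·((−1)^{n+1}·G_{n+t+1}^5 + G_{t+1}^5) − 47·((−1)^{n+1}·G_{n+t}^5 + G_t^5)) − (F_{m+2} − F_{m−3})·(7·((−1)^{n+1}·G_{n+t−1}^5 + G_{t−1}^5) + ((−1)^{n+1}·G_{n+t−2}^5 + G_{t−2}^5)) + 44·λ²·(F_{m+2} − F_{m−3})·((−1)^{n+1}·G_{n+t−1} + G_{t−1}) + 44·F_{m+2}·(G_{t+1}^5 − λ²·G_{t+1}) + 44·F_{m+2}·(−1)^{n+1}·(G_{n+t+1}^5 − λ²·G_{n+t+1}). -/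

import Mathlib

theorem gib_sq_const (G : ℤ → ℤ) (hG : ∀ k : ℤ, G (k + 2) = G (k + 1) + G k) :
    ∀ k : ℤ, (G (k+1)^2 - G k * G (k+2))^2 = (G 1 ^ 2 - G 0 * G 2)^2 := by
  have key : ∀ k : ℤ, G (k + 2) ^ 2 - G (k + 1) * G (k + 3) = -(G (k + 1) ^ 2 - G k * G (k + 2)) := by
    intro k
    have h1 := hG k
    have h2 : G (k+3) = G (k+2) + G (k+1) := by
      have := hG (k+1)
      rwa [show k+1+2 = k+3 by ring, show k+1+1 = k+2 by ring] at this
    rw [h2, h1]; ring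
  intro k
  induction k using Int.induction_on with
  | zero => norm_num
  | succ i ih =>
      have := key (i : ℤ)
      rw [show (i:ℤ)+1+1 = (i:ℤ)+2 by ring, show (i:ℤ)+1+2 = (i:ℤ)+3 by ring]
      rw [← ih]; linear_combination (G ((i:ℤ)+2)^2 - G ((i:ℤ)+1) * G ((i:ℤ)+3) - (G ((i:ℤ)+1)^2 - G (i:ℤ) * G ((i:ℤ)+2))) * this
  | pred i ih =>
      have := key (-(i:ℤ)-1)
      rw [show -(i:ℤ)-1+2 = -(i:ℤ)+1 by ring, show -(i:ℤ)-1+1 = -(i:ℤ) by ring, show -(i:ℤ)-1+3 = -(i:ℤ)+2 by ring] at this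
      rw [show -(i:ℤ)-1+1 = -(i:ℤ) by ring, show -(i:ℤ)-1+2 = -(i:ℤ)+1 by ring]
      rw [← ih]; linear_combination (G (-(i:ℤ))^2 - G (-(i:ℤ)-1) * G (-(i:ℤ)+1) - (G (-(i:ℤ)+1)^2 - G (-(i:ℤ)) * G (-(i:ℤ)+2))) * this

theorem gib_shift (F : ℤ → ℤ) (hF0 : F 0 = 0) (hF1 : F 1 = 1)
    (hF : ∀ k : ℤ, F (k + 2) = F (k + 1) + F k)
    (G : ℤ → ℤ) (hG : ∀ k : ℤ, G (k + 2) = G (k + 1) + G k) :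
    ∀ m x : ℤ, G (x + m) = F m * G (x+1) + F (m-1) * G x := by
  have hFm1 : F (-1) = 1 := by
    have := hF (-1); norm_num at this; omega
  intro m
  induction m using Int.induction_on with
  | zero => intro x; norm_num [hF0, hFm1]
  | succ k ih =>
      intro x
      have h1 := ih (x+1)
      have h3 : F ((k:ℤ)+1) = F (k:ℤ) + F ((k:ℤ)-1) := by
        have := hF ((k:ℤ)-1)
        rwa [show (k:ℤ)-1+2 = (k:ℤ)+1 by ring, show (k:ℤ)-1+1 = (k:ℤ) by ring] at this
      rw [show x + ((k:ℤ)+1) = x+1+(k:ℤ) by ring, h1, show x+1+1 = x+2 by ring, hG x,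
        show (k:ℤ)+1-1 = (k:ℤ) by ring, h3]
      ring
  | pred k ih =>
      intro x
      have h1 := ih (x-1)
      have h2 : G (x+1) = G x + G (x-1) := by
        have := hG (x-1)
        rwa [show x-1+2 = x+1 by ring, show x-1+1 = x by ring] at this
      have h3 : F (-(k:ℤ)) = F (-(k:ℤ)-1) + F (-(k:ℤ)-2) := by
        have := hF (-(k:ℤ)-2)
        rwa [show -(k:ℤ)-2+2 = -(k:ℤ) by ring, show -(k:ℤ)-2+1 = -(k:ℤ)-1 by ring] at this
      rw [show x + (-(k:ℤ)-1) = x-1+(-(k:ℤ)) by ring, h1, show x-1+1 = x by ring,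
        show -(k:ℤ)-1-1 = -(k:ℤ)-2 by ring]
      linear_combination (-F (-(k:ℤ)-1)) * h2 + G x * h3

theorem alt_sum_products_five (F : ℤ → ℤ) (hF0 : F 0 = 0) (hF1 : F 1 = 1)
    (hF : ∀ k : ℤ, F (k + 2) = F (k + 1) + F k)
    (G : ℤ → ℤ) (hG : ∀ k : ℤ, G (k + 2) = G (k + 1) + G k) (n : ℕ) (t m : ℤ) :
    220 * ∑ j ∈ Finset.Icc 1 n,
        (-1 : ℤ) ^ (j - 1) * (G ((j : ℤ) + t - 1) * G ((j : ℤ) + t) * G ((j : ℤ) + t + 1) *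
          G ((j : ℤ) + t + 2) * G ((j : ℤ) + t + m)) =
      -((F (m + 2) - F (m - 3)) *
          (-((-1 : ℤ) ^ (n + 1) * G ((n : ℤ) + t + 3) ^ 5 + G (t + 3) ^ 5) +
            9 * ((-1 : ℤ) ^ (n + 1) * G ((n : ℤ) + t + 2) ^ 5 + G (t + 2) ^ 5))) -
        (F (m + 2) - F (m - 3)) *
          (31 * ((-1 : ℤ) ^ (n + 1) * G ((n : ℤ) + t + 1) ^ 5 + G (t + 1) ^ 5) -
            47 * ((-1 : ℤ) ^ (n + 1) * G ((n : ℤ) + t) ^ 5 + G t ^ 5)) -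
        (F (m + 2) - F (m - 3)) *
          (7 * ((-1 : ℤ) ^ (n + 1) * G ((n : ℤ) + t - 1) ^ 5 + G (t - 1) ^ 5) +
            ((-1 : ℤ) ^ (n + 1) * G ((n : ℤ) + t - 2) ^ 5 + G (t - 2) ^ 5)) +
        44 * (G 1 ^ 2 - G 0 * G 2) ^ 2 * (F (m + 2) - F (m - 3)) *
          ((-1 : ℤ) ^ (n + 1) * G ((n : ℤ) + t - 1) + G (t - 1)) +
        44 * F (m + 2) * (G (t + 1) ^ 5 - (G 1 ^ 2 - G 0 * G 2) ^ 2 * G (t + 1)) +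
        44 * F (m + 2) * (-1 : ℤ) ^ (n + 1) *
          (G ((n : ℤ) + t + 1) ^ 5 - (G 1 ^ 2 - G 0 * G 2) ^ 2 * G ((n : ℤ) + t + 1)) := by
  induction n with
  | zero =>
      norm_num
  | succ n IH =>
      rw [Finset.sum_Icc_succ_top (by omega : 1 ≤ n + 1)]
      push_cast
      try simp only [Nat.add_sub_cancel]
      rw [show (n:ℤ)+1+t = (n:ℤ)+t+1 from by ring]
      rw [show (n:ℤ)+t+1+3 = (n:ℤ)+t+4 from by ring, show (n:ℤ)+t+1+2 = (n:ℤ)+t+3 from by ring,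
        show (n:ℤ)+t+1-1 = (n:ℤ)+t from by ring, show (n:ℤ)+t+1-2 = (n:ℤ)+t-1 from by ring]
      have hsh := gib_shift F hF0 hF1 hF G hG m ((n:ℤ)+t+1)
      rw [show (n:ℤ)+t+1+1 = (n:ℤ)+t+2 from by ring] at hsh
      rw [hsh]
      rw [show (n:ℤ)+t+1+1 = (n:ℤ)+t+2 from by ring]
      rw [pow_succ ((-1:ℤ)) (n+1)]
      rw [pow_succ ((-1:ℤ)) n] at IH ⊢
      have hFm2 : F (m+2) = 2 * F m + F (m-1) := by
        have a1 := hF m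
        have a2 : F (m+1) = F m + F (m-1) := by
          have := hF (m-1)
          rwa [show m-1+2 = m+1 by ring, show m-1+1 = m by ring] at this
        omega
      have hFm3 : F (m-3) = 2 * F (m-1) - F m := by
        have a3 : F (m-1) = F (m-2) + F (m-3) := by
          have := hF (m-3)
          rwa [show m-3+2 = m-1 by ring, show m-3+1 = m-2 by ring] at this
        have a4 : F m = F (m-1) + F (m-2) := by
          have := hF (m-2)
          rwa [show m-2+2 = m by ring, show m-2+1 = m-1 by ring] at this
        omega
      rw [hFm2, hFm3] at IH ⊢
      have hsq := gib_sq_const G hG ((n:ℤ)+t)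
      rw [show (n:ℤ)+t+1 = (n:ℤ)+t+1 from rfl] at hsq
      rw [← hsq] at IH ⊢
      have e4 : G ((n:ℤ)+t+4) = G ((n:ℤ)+t+3) + G ((n:ℤ)+t+2) := by
        have := hG ((n:ℤ)+t+2)
        rwa [show (n:ℤ)+t+2+2 = (n:ℤ)+t+4 by ring, show (n:ℤ)+t+2+1 = (n:ℤ)+t+3 by ring] at this
      have e3 : G ((n:ℤ)+t+3) = G ((n:ℤ)+t+2) + G ((n:ℤ)+t+1) := by
        have := hG ((n:ℤ)+t+1)
        rwa [show (n:ℤ)+t+1+2 = (n:ℤ)+t+3 by ring, show (n:ℤ)+t+1+1 = (n:ℤ)+t+2 by ring] at this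
      have e2 : G ((n:ℤ)+t+2) = G ((n:ℤ)+t+1) + G ((n:ℤ)+t) := by
        have := hG ((n:ℤ)+t)
        rwa [show (n:ℤ)+t+2 = (n:ℤ)+t+2 by ring, show (n:ℤ)+t+1 = (n:ℤ)+t+1 by ring] at this
      have w1 : G ((n:ℤ)+t-1) = G ((n:ℤ)+t+1) - G ((n:ℤ)+t) := by
        have := hG ((n:ℤ)+t-1)
        rw [show (n:ℤ)+t-1+2 = (n:ℤ)+t+1 by ring, show (n:ℤ)+t-1+1 = (n:ℤ)+t by ring] at this
        linarith
      have w2 : G ((n:ℤ)+t-2) = G ((n:ℤ)+t) - G ((n:ℤ)+t-1) := by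
        have := hG ((n:ℤ)+t-2)
        rw [show (n:ℤ)+t-2+2 = (n:ℤ)+t by ring, show (n:ℤ)+t-2+1 = (n:ℤ)+t-1 by ring] at this
        linarith
      rw [e3, e2, w2, w1] at IH
      rw [e4, e3, e2, w1]
      linear_combination IH
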